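/- arXiv:1511.00224 — 2 statements merged into one kernel-verified Lean document; each statement's English description precedes it below -/
import Mathlib

section
/- For every probability distribution p = (p_k) on ℕ with p_k > 0 for all k, every real γ₁ > 0 and every s ∈ {2,3,4}, the operator B_s = Σ_{k=0}^{s−1} γ₁^{s−1−k} A^k is injective on real sequences: if v ∈ D(A^{s−1}) ∩ ℝ^ℕ and B_s v = 0, then v = 0. -/
open scoped BigOperators
open Filter

noncomputable section

/-- Tail sum `q_l = Σ_{k ≥ l} p_k`. -/
def qtail (p : ℕ → ℝ) (l : ℕ) : ℝ := ∑' k, p (l + k)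

/-- The operator `A` on real sequences: `(A v)(l) = (1/q_l) Σ_{k=l}^∞ p_k v(k)`. -/
def opAR (p : ℕ → ℝ) (v : ℕ → ℝ) : ℕ → ℝ :=
  fun l => (1 / qtail p l) * ∑' k, p (l + k) * v (l + k)

/-- Membership in the domain `D(A) = {v : Σ_k p_k |v(k)| < ∞}` (real sequences). -/
def memDAR (p : ℕ → ℝ) (v : ℕ → ℝ) : Prop :=
  Summable fun k => p k * |v k|

/-- Membership in the domain `D(A^m) = {v : A^k v ∈ D(A) for k = 0,…,m-1}`. -/
def memDAiterR (p : ℕ → ℝ) (m : ℕ) (v : ℕ → ℝ) : Prop :=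
  ∀ k < m, memDAR p ((opAR p)^[k] v)

/-- The operator `B_s = Σ_{k=0}^{s-1} γ₁^{s-1-k} A^k` on real sequences. -/
def opBR (p : ℕ → ℝ) (γ₁ : ℝ) (s : ℕ) (v : ℕ → ℝ) : ℕ → ℝ :=
  fun l => ∑ k ∈ Finset.range s, γ₁ ^ (s - 1 - k) * ((opAR p)^[k] v) l

lemma qtail_pos (p : ℕ → ℝ) (hp : ∀ k, 0 < p k) (hps : Summable p) (l : ℕ) :
    0 < qtail p l := by
  have hsl : Summable (fun k => p (l + k)) := by
    have := (summable_nat_add_iff (f := p) l).2 hps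
    simpa [add_comm] using this
  exact Summable.tsum_pos hsl (fun i => (hp _).le) 0 (hp _)

/-- Core lemma: `A` has no eigenvalue with nonpositive real part (other than trivially). -/
lemma core_eig (p : ℕ → ℝ) (hp : ∀ k, 0 < p k) (hps : Summable p)
    (lam : ℂ) (hlam : lam ≠ 0) (hre : lam.re ≤ 0)
    (u : ℕ → ℂ) (hu : Summable fun k => p k * ‖u k‖)
    (heig : ∀ l, (∑' k, (p (l + k) : ℂ) * u (l + k)) = lam * ((qtail p l : ℝ) : ℂ) * u l) :
    ∀ l, u l = 0 := by
  have hq := qtail_pos p hp hps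
  have hg : Summable (fun k => (p k : ℂ) * u k) := by
    apply Summable.of_norm
    have : ∀ k, ‖(p k : ℂ) * u k‖ = p k * ‖u k‖ := by
      intro k
      simp [norm_mul, abs_of_pos (hp k)]
    exact hu.congr (fun k => (this k).symm)
  have htail : ∀ l, Summable (fun k => (p (l + k) : ℂ) * u (l + k)) := by
    intro l
    have := (summable_nat_add_iff (f := fun k => (p k : ℂ) * u k) l).2 hg
    simpa [add_comm] using this
  set S : ℕ → ℂ := fun l => ∑' k, (p (l + k) : ℂ) * u (l + k) with hSdef
  set t : ℕ → ℂ := fun l => ((qtail p l : ℝ) : ℂ) * u l with htdef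
  have hS : ∀ l, S l = lam * t l := by
    intro l; rw [hSdef]; simp only []; rw [heig l]; ring
  have hrec : ∀ l, S l = (p l : ℂ) * u l + S (l + 1) := by
    intro l
    rw [hSdef]
    simp only []
    rw [Summable.tsum_eq_zero_add (htail l)]
    congr 1
    apply tsum_congr; intro k
    have : l + (k + 1) = (l + 1) + k := by omega
    rw [this]
  have hS0 : Tendsto S atTop (nhds 0) := by
    have := tendsto_sum_nat_add (fun k => (p k : ℂ) * u k)
    have heq : (fun i => ∑' (k : ℕ), (p (k + i) : ℂ) * u (k + i)) = S := by
      funext i; rw [hSdef]; simp only []; apply tsum_congr; intro k; rw [add_comm k i]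
    rwa [heq] at this
  have ht0 : Tendsto t atTop (nhds 0) := by
    have h1 : Tendsto (fun l => lam⁻¹ * S l) atTop (nhds (lam⁻¹ * 0)) := hS0.const_mul _
    have heq : (fun l => lam⁻¹ * S l) = t := by
      funext l; rw [hS l]; field_simp
    rwa [heq, mul_zero] at h1
  -- monotonicity of ‖t‖
  have hkey : ∀ r : ℝ, 0 ≤ r → ‖lam‖ ≤ ‖lam - (r : ℂ)‖ := by
    intro r hr
    have h2 : ‖lam‖ ^ 2 ≤ ‖lam - (r : ℂ)‖ ^ 2 := by
      rw [Complex.sq_norm, Complex.sq_norm, Complex.normSq_apply, Complex.normSq_apply]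
      simp only [Complex.sub_re, Complex.sub_im, Complex.ofReal_re, Complex.ofReal_im]
      nlinarith [hre, hr]
    nlinarith [norm_nonneg lam, norm_nonneg (lam - (r:ℂ)), h2]
  have hstep : ∀ l, ‖t l‖ ≤ ‖t (l + 1)‖ := by
    intro l
    have h1 : lam * t (l + 1) = (lam - ((p l / qtail p l : ℝ) : ℂ)) * t l := by
      have e1 : lam * t (l + 1) = S (l + 1) := (hS (l + 1)).symm
      have e2 : S (l + 1) = S l - (p l : ℂ) * u l := by rw [hrec l]; ring
      have e3 : ((p l / qtail p l : ℝ) : ℂ) * t l = (p l : ℂ) * u l := by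
        rw [htdef]; simp only []
        push_cast
        have : (qtail p l : ℂ) ≠ 0 := by
          exact_mod_cast (hq l).ne'
        field_simp
      rw [e1, e2, hS l, ← e3]; ring
    have h2 : ‖lam‖ * ‖t (l + 1)‖ = ‖lam - ((p l / qtail p l : ℝ) : ℂ)‖ * ‖t l‖ := by
      rw [← norm_mul, ← norm_mul, h1]
    have h3 : ‖lam‖ ≤ ‖lam - ((p l / qtail p l : ℝ) : ℂ)‖ := by
      have := hkey (p l / qtail p l) (le_of_lt (div_pos (hp l) (hq l)))
      exact this
    have h4 : ‖lam‖ * ‖t l‖ ≤ ‖lam‖ * ‖t (l + 1)‖ := by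
      rw [h2]
      exact mul_le_mul_of_nonneg_right h3 (norm_nonneg _)
    have hlampos : 0 < ‖lam‖ := norm_pos_iff.2 hlam
    exact le_of_mul_le_mul_left h4 hlampos
  have hmono : Monotone (fun l => ‖t l‖) := monotone_nat_of_le_succ hstep
  have hzero : ∀ l, t l = 0 := by
    intro l
    have h1 : Tendsto (fun m => ‖t m‖) atTop (nhds 0) := by
      simpa using ht0.norm
    have h2 : ‖t l‖ ≤ 0 := ge_of_tendsto h1 (Filter.eventually_atTop.2 ⟨l, fun m hm => hmono hm⟩)
    exact norm_le_zero_iff.1 h2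
  intro l
  have := hzero l
  rw [htdef] at this
  simp only [] at this
  rcases mul_eq_zero.1 this with h | h
  · exact absurd h (by exact_mod_cast (hq l).ne')
  · exact h

lemma opAR_tsum (p : ℕ → ℝ) (hp : ∀ k, 0 < p k) (hps : Summable p) (w : ℕ → ℝ) (l : ℕ) :
    (∑' k, (p (l + k) : ℂ) * ((w (l + k) : ℝ) : ℂ))
      = ((qtail p l : ℝ) : ℂ) * ((opAR p w l : ℝ) : ℂ) := by
  have hq : (qtail p l : ℝ) ≠ 0 := (qtail_pos p hp hps l).ne'
  have hreal : qtail p l * opAR p w l = ∑' k, p (l + k) * w (l + k) := by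
    rw [opAR]; field_simp
  calc (∑' k, (p (l + k) : ℂ) * ((w (l + k) : ℝ) : ℂ))
      = ((∑' k, p (l + k) * w (l + k) : ℝ) : ℂ) := by
        rw [Complex.ofReal_tsum]; push_cast; ring_nf
    _ = _ := by rw [← hreal]; push_cast; ring

lemma two_seq_zero (p : ℕ → ℝ) (hp : ∀ k, 0 < p k) (hps : Summable p)
    (lam α β : ℂ) (hlam : lam ≠ 0) (hre : lam.re ≤ 0)
    (a b : ℕ → ℝ)
    (ha : Summable fun k => p k * |a k|) (hb : Summable fun k => p k * |b k|)
    (heig : ∀ l, α * ((opAR p a l : ℝ) : ℂ) + β * ((opAR p b l : ℝ) : ℂ)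
      = lam * (α * (a l : ℂ) + β * (b l : ℂ))) :
    ∀ l, α * (a l : ℂ) + β * (b l : ℂ) = 0 := by
  set u : ℕ → ℂ := fun n => α * (a n : ℂ) + β * (b n : ℂ) with hu_def
  have hga : Summable (fun k => (p k : ℂ) * (a k : ℂ)) := by
    apply Summable.of_norm
    have : ∀ k, ‖(p k : ℂ) * (a k : ℂ)‖ = p k * |a k| := by
      intro k; simp [norm_mul, abs_of_pos (hp k)]
    exact ha.congr (fun k => (this k).symm)
  have hgb : Summable (fun k => (p k : ℂ) * (b k : ℂ)) := by
    apply Summable.of_norm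
    have : ∀ k, ‖(p k : ℂ) * (b k : ℂ)‖ = p k * |b k| := by
      intro k; simp [norm_mul, abs_of_pos (hp k)]
    exact hb.congr (fun k => (this k).symm)
  have hta : ∀ l, Summable (fun k => (p (l + k) : ℂ) * (a (l + k) : ℂ)) := by
    intro l
    have := (summable_nat_add_iff (f := fun k => (p k : ℂ) * (a k : ℂ)) l).2 hga
    simpa [add_comm] using this
  have htb : ∀ l, Summable (fun k => (p (l + k) : ℂ) * (b (l + k) : ℂ)) := by
    intro l
    have := (summable_nat_add_iff (f := fun k => (p k : ℂ) * (b k : ℂ)) l).2 hgb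
    simpa [add_comm] using this
  have husum : Summable fun k => p k * ‖u k‖ := by
    apply Summable.of_nonneg_of_le
      (fun k => mul_nonneg (hp k).le (norm_nonneg _))
      (fun k => ?_)
      (((ha.mul_left ‖α‖).add (hb.mul_left ‖β‖)))
    rw [hu_def]
    simp only []
    calc p k * ‖α * (a k : ℂ) + β * (b k : ℂ)‖
        ≤ p k * (‖α‖ * |a k| + ‖β‖ * |b k|) := by
          apply mul_le_mul_of_nonneg_left _ (hp k).le
          refine (norm_add_le _ _).trans ?_
          simp [norm_mul]
      _ = ‖α‖ * (p k * |a k|) + ‖β‖ * (p k * |b k|) := by ring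
  have hSform : ∀ l, (∑' k, (p (l + k) : ℂ) * u (l + k))
      = lam * ((qtail p l : ℝ) : ℂ) * u l := by
    intro l
    have hsplit : (∑' k, (p (l + k) : ℂ) * u (l + k))
        = α * (∑' k, (p (l + k) : ℂ) * (a (l + k) : ℂ))
          + β * (∑' k, (p (l + k) : ℂ) * (b (l + k) : ℂ)) := by
      rw [← tsum_mul_left, ← tsum_mul_left, ← Summable.tsum_add ((hta l).mul_left α) ((htb l).mul_left β)]
      apply tsum_congr; intro k; rw [hu_def]; ring
    rw [hsplit, opAR_tsum p hp hps a l, opAR_tsum p hp hps b l, hu_def]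
    simp only []
    linear_combination ((qtail p l : ℝ) : ℂ) * heig l
  exact core_eig p hp hps lam hlam hre u husum hSform



/-- For any probability distribution `p` on `ℕ` with all masses positive, any `γ₁ > 0`
and any `s ∈ {2,3,4}`, the operator `B_s` is injective on real sequences in its domain. -/
theorem injective_opB_real_s_two_three_four
    (p : ℕ → ℝ) (hp : ∀ k, 0 < p k) (hsum : HasSum p 1)
    (γ₁ : ℝ) (hγ₁ : 0 < γ₁) (s : ℕ) (hs : s = 2 ∨ s = 3 ∨ s = 4)
    (v : ℕ → ℝ) (hv : memDAiterR p (s - 1) v) (hBv : opBR p γ₁ s v = 0) :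
    v = 0 := by
  have hps : Summable p := hsum.summable
  have hγc : (γ₁ : ℂ) ≠ 0 := by exact_mod_cast hγ₁.ne'
  rcases hs with hs | hs | hs
  · -- s = 2
    subst hs
    have hv0 : Summable fun k => p k * |v k| := by
      have := hv 0 (by omega); simpa [memDAR] using this
    have hB : ∀ l, γ₁ * v l + opAR p v l = 0 := by
      intro l
      have := congrFun hBv l
      simpa [opBR, Finset.sum_range_succ] using this
    have key := two_seq_zero p hp hps (-(γ₁ : ℂ)) 1 0 (by simpa using hγc)
      (by simp; positivity) v v hv0 hv0 ?_
    · funext l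
      have h := key l
      simp only [one_mul, zero_mul, add_zero] at h
      exact_mod_cast h
    · intro l
      have hBc := congrArg (Complex.ofReal) (hB l)
      push_cast at hBc
      simp only [one_mul, zero_mul, add_zero]
      linear_combination hBc
  · -- s = 3
    subst hs
    have hv0 : Summable fun k => p k * |v k| := by
      have := hv 0 (by omega); simpa [memDAR] using this
    have hv1 : Summable fun k => p k * |opAR p v k| := by
      have := hv 1 (by omega); simpa [memDAR] using this
    have hB : ∀ l, γ₁ ^ 2 * v l + γ₁ * opAR p v l + opAR p (opAR p v) l = 0 := by
      intro l
      have := congrFun hBv l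
      simpa [opBR, Finset.sum_range_succ, Function.iterate_succ_apply'] using this
    set lamp : ℂ := ((-γ₁ / 2 : ℝ) : ℂ) + ((γ₁ * Real.sqrt 3 / 2 : ℝ) : ℂ) * Complex.I with hlampdef
    set lamm : ℂ := ((-γ₁ / 2 : ℝ) : ℂ) - ((γ₁ * Real.sqrt 3 / 2 : ℝ) : ℂ) * Complex.I with hlammdef
    have h3 : (Real.sqrt 3 : ℝ) ^ 2 = 3 := Real.sq_sqrt (by norm_num)
    have h3c : ((Real.sqrt 3 : ℝ) : ℂ) ^ 2 = 3 := by exact_mod_cast h3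
    have hsum3 : lamp + lamm = -(γ₁ : ℂ) := by
      rw [hlampdef, hlammdef]; push_cast; ring
    have hprod : lamp * lamm = (γ₁ : ℂ) ^ 2 := by
      rw [hlampdef, hlammdef]
      have hI : (Complex.I) ^ 2 = -1 := Complex.I_sq
      push_cast
      linear_combination (-(γ₁:ℂ)^2 * ((Real.sqrt 3 : ℝ) : ℂ)^2 / 4) * hI
        + ((γ₁:ℂ)^2 / 4) * h3c
    have hlamp_re : lamp.re = -γ₁ / 2 := by
      rw [hlampdef]; simp
    have hlamp_ne : lamp ≠ 0 := by
      intro h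
      have := congrArg Complex.re h
      rw [hlamp_re] at this
      simp at this
      linarith
    have hlamm_im : lamm.im = -(γ₁ * Real.sqrt 3 / 2) := by
      rw [hlammdef]; simp
    have key := two_seq_zero p hp hps lamp 1 (-lamm) hlamp_ne
      (by rw [hlamp_re]; linarith) (opAR p v) v hv1 hv0 ?_
    · funext l
      have h := key l
      have him : (-lamm).im * v l = 0 := by
        have := congrArg Complex.im h
        simpa [Complex.add_im, Complex.mul_im, Complex.one_im, Complex.one_re,
          Complex.ofReal_im, Complex.ofReal_re] using this
      have hmm : (-lamm).im = γ₁ * Real.sqrt 3 / 2 := by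
        rw [hlammdef]; simp
      rw [hmm] at him
      have hs3 : (0:ℝ) < Real.sqrt 3 := Real.sqrt_pos.2 (by norm_num)
      have hcoef : γ₁ * Real.sqrt 3 / 2 ≠ 0 := by positivity
      exact (mul_eq_zero.1 him).resolve_left hcoef
    · intro l
      have hBc := congrArg (Complex.ofReal) (hB l)
      push_cast at hBc
      simp only [one_mul]
      linear_combination hBc - ((opAR p v l : ℝ) : ℂ) * hsum3 + ((v l : ℝ) : ℂ) * hprod
  · -- s = 4
    subst hs
    have hv0 : Summable fun k => p k * |v k| := by
      have := hv 0 (by omega); simpa [memDAR] using this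
    have hv1 : Summable fun k => p k * |opAR p v k| := by
      have := hv 1 (by omega); simpa [memDAR] using this
    have hv2 : Summable fun k => p k * |opAR p (opAR p v) k| := by
      have := hv 2 (by omega); simpa [memDAR, Function.iterate_succ_apply'] using this
    have hB : ∀ l, γ₁ ^ 3 * v l + γ₁ ^ 2 * opAR p v l + γ₁ * opAR p (opAR p v) l
        + opAR p (opAR p (opAR p v)) l = 0 := by
      intro l
      have := congrFun hBv l
      simpa [opBR, Finset.sum_range_succ, Function.iterate_succ_apply'] using this
    have hI : (Complex.I) ^ 2 = -1 := Complex.I_sq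
    -- Step 1: eigenvalue -γ₁ for w = A²v + γ₁² v
    have c1 := two_seq_zero p hp hps (-(γ₁ : ℂ)) 1 ((γ₁ : ℂ) ^ 2)
      (by simpa using hγc) (by simp; positivity) (opAR p (opAR p v)) v hv2 hv0 ?_
    swap
    · intro l
      have hBc := congrArg (Complex.ofReal) (hB l)
      push_cast at hBc
      simp only [one_mul]
      linear_combination hBc
    -- Step 2: eigenvalue i γ₁ for w = A v + i γ₁ v
    have c2 := two_seq_zero p hp hps ((γ₁ : ℂ) * Complex.I) 1 ((γ₁ : ℂ) * Complex.I)
      (by simp [hγ₁.ne', Complex.I_ne_zero]) (by simp) (opAR p v) v hv1 hv0 ?_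
    swap
    · intro l
      have hc := c1 l
      simp only [one_mul] at hc
      simp only [one_mul]
      linear_combination hc - (γ₁:ℂ)^2 * ((v l : ℝ) : ℂ) * hI
    · funext l
      have h := c2 l
      have him := congrArg Complex.im h
      simp only [one_mul, Complex.add_im, Complex.mul_im, Complex.ofReal_re,
        Complex.ofReal_im, Complex.mul_re, Complex.I_re, Complex.I_im] at him
      simp at him
      rcases him with h' | h'
      · exact absurd h' hγ₁.ne'
      · simpa using h'
end
end

section
/- For every integer s ≥ 5, every real γ₁ ≥ 1, and the geometric distribution p_k = θ(1−θ)^k whose parameter θ ∈ (0,1) satisfies θ < 2·cos(2π/5), there exists a nonzero REAL sequence z ∈ D(A^{s−1}) ∩ ℝ^ℕ with B_s z = 0; in particular B_s is not injective on D(A^{s−1}) ∩ ℝ^ℕ. -/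
open scoped BigOperators

noncomputable section

/-- The operator `A` on complex sequences: `(A v)(l) = (1/q_l) Σ_{k=l}^∞ p_k v(k)`. -/
def opA (p : ℕ → ℝ) (v : ℕ → ℂ) : ℕ → ℂ :=
  fun l => (1 / (qtail p l : ℂ)) * ∑' k, (p (l + k) : ℂ) * v (l + k)

/-- Membership in the domain `D(A) = {v : Σ_k p_k |v(k)| < ∞}`. -/
def memDA (p : ℕ → ℝ) (v : ℕ → ℂ) : Prop :=
  Summable fun k => p k * ‖v k‖

/-- Membership in the domain `D(A^m) = {v : A^k v ∈ D(A) for k = 0,…,m-1}`. -/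
def memDAiter (p : ℕ → ℝ) (m : ℕ) (v : ℕ → ℂ) : Prop :=
  ∀ k < m, memDA p ((opA p)^[k] v)

/-- The operator `B_s = Σ_{k=0}^{s-1} γ₁^{s-1-k} A^k`. -/
def opB (p : ℕ → ℝ) (γ₁ : ℝ) (s : ℕ) (v : ℕ → ℂ) : ℕ → ℂ :=
  fun l => ∑ k ∈ Finset.range s, (γ₁ : ℂ) ^ (s - 1 - k) * ((opA p)^[k] v) l

lemma qtail_geom {θ : ℝ} (hθ0 : 0 < θ) (hθ1 : θ < 1) (l : ℕ) :
    qtail (fun k => θ * (1 - θ) ^ k) l = (1 - θ) ^ l := by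
  have h1 : (0:ℝ) ≤ 1 - θ := by linarith
  have h2 : 1 - θ < 1 := by linarith
  unfold qtail
  have h3 : ∀ k : ℕ, θ * (1-θ)^(l+k) = (θ * (1-θ)^l) * (1-θ)^k := by
    intro k; rw [pow_add]; ring
  simp only [h3]
  rw [tsum_mul_left, tsum_geometric_of_lt_one h1 h2]
  have : (1 : ℝ) - (1 - θ) = θ := by ring
  rw [this]
  field_simp

lemma opA_two {θ : ℝ} (hθ0 : 0 < θ) (hθ1 : θ < 1) (w₁ w₂ μ₁ μ₂ : ℂ)
    (h₁ : ‖w₁‖ < 1) (h₂ : ‖w₂‖ < 1) :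
    opA (fun k => θ * (1 - θ) ^ k)
      (fun l => μ₁ * (w₁ / (1 - (θ:ℂ))) ^ l + μ₂ * (w₂ / (1 - (θ:ℂ))) ^ l)
    = fun l => (μ₁ * ((θ:ℂ) / (1 - w₁))) * (w₁ / (1 - (θ:ℂ))) ^ l
        + (μ₂ * ((θ:ℂ) / (1 - w₂))) * (w₂ / (1 - (θ:ℂ))) ^ l := by
  have hne : (1 - (θ:ℂ)) ≠ 0 := by
    intro h
    have : (θ:ℂ) = 1 := by linear_combination -h
    rw [Complex.ofReal_eq_one] at this
    linarith
  have hw₁ : (1 : ℂ) - w₁ ≠ 0 := by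
    intro h
    have : w₁ = 1 := by linear_combination -h
    rw [this] at h₁; simp at h₁
  have hw₂ : (1 : ℂ) - w₂ ≠ 0 := by
    intro h
    have : w₂ = 1 := by linear_combination -h
    rw [this] at h₂; simp at h₂
  funext l
  unfold opA
  rw [qtail_geom hθ0 hθ1]
  have hterm : ∀ k : ℕ,
      (((fun k => θ * (1-θ)^k) (l+k) : ℝ) : ℂ) *
        ((fun l => μ₁ * (w₁ / (1 - (θ:ℂ))) ^ l + μ₂ * (w₂ / (1 - (θ:ℂ))) ^ l) (l+k))
      = ((θ:ℂ) * μ₁ * w₁^l) * w₁^k + ((θ:ℂ) * μ₂ * w₂^l) * w₂^k := by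
    intro k
    simp only
    push_cast
    rw [div_pow, div_pow, pow_add, pow_add, pow_add]
    field_simp
  rw [tsum_congr hterm,
    Summable.tsum_add ((summable_geometric_of_norm_lt_one h₁).mul_left _)
      ((summable_geometric_of_norm_lt_one h₂).mul_left _),
    tsum_mul_left, tsum_mul_left,
    tsum_geometric_of_norm_lt_one h₁, tsum_geometric_of_norm_lt_one h₂]
  have hpow : ((1 - θ:ℝ)^l : ℂ) ≠ 0 := by
    apply pow_ne_zero
    intro h
    rw [show ((1 - θ : ℝ) : ℂ) = 1 - (θ:ℂ) by push_cast; ring] at h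
    exact hne h
  push_cast
  rw [div_pow, div_pow]
  field_simp

/-- For `s ≥ 5`, `γ₁ ≥ 1` and the geometric distribution with parameter `θ ∈ (0,1)`,
`θ < 2 cos(2π/5)`, there is a nonzero real sequence `z ∈ D(A^{s-1}) ∩ ℝ^ℕ` killed
by `B_s`; in particular `B_s` is not injective on `D(A^{s-1}) ∩ ℝ^ℕ`. -/
theorem opB_not_injective_on_reals_of_five_le
    (θ : ℝ) (hθ : θ ∈ Set.Ioo (0 : ℝ) 1) (hθ5 : θ < 2 * Real.cos (2 * Real.pi / 5))
    (s : ℕ) (hs : 5 ≤ s) (γ₁ : ℝ) (hγ₁ : 1 ≤ γ₁) :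
    ∃ z : ℕ → ℂ, z ≠ 0 ∧ (∀ k, (z k).im = 0) ∧
      memDAiter (fun k => θ * (1 - θ) ^ k) (s - 1) z ∧
      opB (fun k => θ * (1 - θ) ^ k) γ₁ s z = 0 := by
  obtain ⟨hθ0, hθ1⟩ := hθ
  have hπ := Real.pi_pos
  have hs0 : (0:ℝ) < s := by
    have : (5:ℝ) ≤ s := by exact_mod_cast hs
    linarith
  have hs5 : (5:ℝ) ≤ s := by exact_mod_cast hs
  set t : ℝ := 2 * Real.pi / s with ht
  have ht0 : 0 < t := by positivity
  have hts : t ≤ 2 * Real.pi / 5 := by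
    rw [ht]
    apply div_le_div_of_nonneg_left (by linarith) (by norm_num) hs5
  have h25pi : 2 * Real.pi / 5 < Real.pi / 2 := by linarith
  have hcos5pos : 0 < Real.cos (2*Real.pi/5) :=
    Real.cos_pos_of_mem_Ioo ⟨by linarith, h25pi⟩
  have hcosle : Real.cos (2*Real.pi/5) ≤ Real.cos t :=
    Real.cos_le_cos_of_nonneg_of_le_pi (le_of_lt ht0) (by linarith) hts
  have hcost1 : Real.cos t < 1 := by
    have h := Real.cos_lt_cos_of_nonneg_of_le_pi le_rfl (by linarith : t ≤ Real.pi) ht0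
    simpa using h
  have hγ0 : (0:ℝ) < γ₁ := by linarith
  have hγC : (γ₁:ℂ) ≠ 0 := Complex.ofReal_ne_zero.mpr (ne_of_gt hγ0)
  have hθC : (θ:ℂ) ≠ 0 := Complex.ofReal_ne_zero.mpr (ne_of_gt hθ0)
  set ω : ℂ := Complex.exp (t * Complex.I) with hω
  set lam : ℂ := (γ₁:ℂ) * ω with hlam
  have habsω : ‖ω‖ = 1 := Complex.norm_exp_ofReal_mul_I t
  have hnormlam : ‖lam‖ = γ₁ := by
    rw [hlam, norm_mul, Complex.norm_real, Real.norm_eq_abs, habsω, abs_of_pos hγ0, mul_one]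
  have hlam0 : lam ≠ 0 := by
    intro h
    rw [h, norm_zero] at hnormlam
    linarith
  have hωre : ω.re = Real.cos t := by rw [hω]; exact Complex.exp_ofReal_mul_I_re t
  have hlamre : lam.re = γ₁ * Real.cos t := by
    rw [hlam, Complex.mul_re, hωre]
    simp
  have hωs : ω ^ s = 1 := by
    rw [hω, ← Complex.exp_nat_mul]
    have hsC : (s:ℂ) ≠ 0 := by exact_mod_cast (by positivity : (s:ℝ) ≠ 0)
    have : (s:ℂ) * ((t:ℝ) * Complex.I) = 2 * Real.pi * Complex.I := by
      rw [ht]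
      push_cast
      field_simp
    rw [this, Complex.exp_two_pi_mul_I]
  have hlams : lam ^ s = ((γ₁:ℂ)) ^ s := by rw [hlam, mul_pow, hωs, mul_one]
  have hω1 : ω ≠ 1 := by
    intro h
    have h1 : ω.re = 1 := by rw [h]; simp
    rw [hω, Complex.exp_ofReal_mul_I_re] at h1
    linarith
  have hlamne : lam ≠ (γ₁:ℂ) := by
    intro h
    apply hω1
    have : (γ₁:ℂ) * ω = (γ₁:ℂ) * 1 := by rw [mul_one]; exact h
    exact mul_left_cancel₀ hγC this
  -- the conjugate eigenvalue
  have hlams' : (starRingEnd ℂ) lam ^ s = ((γ₁:ℂ)) ^ s := by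
    have := congrArg (starRingEnd ℂ) hlams
    simpa [map_pow, Complex.conj_ofReal] using this
  have hlamne' : (starRingEnd ℂ) lam ≠ (γ₁:ℂ) := by
    intro h
    apply hlamne
    have := congrArg (starRingEnd ℂ) h
    simpa [Complex.conj_ofReal] using this
  -- geometric-sum-vanishing
  have hsumzero : ∀ μ : ℂ, μ ^ s = (γ₁:ℂ)^s → μ ≠ (γ₁:ℂ) →
      ∑ k ∈ Finset.range s, (γ₁:ℂ)^(s-1-k) * μ^k = 0 := by
    intro μ hμs hμne
    have h := geom_sum₂_mul μ ((γ₁:ℂ)) s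
    rw [hμs, sub_self] at h
    have hne : μ - (γ₁:ℂ) ≠ 0 := sub_ne_zero.mpr hμne
    have h0 : ∑ i ∈ Finset.range s, μ ^ i * (γ₁:ℂ)^(s-1-i) = 0 := by
      rcases mul_eq_zero.mp h with h' | h'
      · exact h'
      · exact absurd h' hne
    rw [← h0]
    exact Finset.sum_congr rfl fun k _ => mul_comm _ _
  -- the base w
  set w : ℂ := (lam - (θ:ℂ)) / lam with hwdef
  have hnormw : ‖w‖ < 1 := by
    rw [hwdef, norm_div, div_lt_one (by rw [hnormlam]; exact hγ0)]
    apply lt_of_pow_lt_pow_left₀ 2 (norm_nonneg _)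
    rw [Complex.sq_norm, Complex.sq_norm,
      Complex.normSq_sub]
    have h1 : Complex.normSq ((θ:ℝ):ℂ) = θ^2 := by
      rw [Complex.normSq_ofReal]; ring
    have h2 : (lam * (starRingEnd ℂ) ((θ:ℝ):ℂ)).re = γ₁ * Real.cos t * θ := by
      rw [Complex.conj_ofReal, Complex.mul_re]
      simp [hlamre]
    rw [h1, h2]
    have key : θ < 2 * (γ₁ * Real.cos t) := by nlinarith [hcosle, hcos5pos, hγ₁, hθ5]
    nlinarith [mul_lt_mul_of_pos_left key hθ0]
  have hnormw' : ‖(starRingEnd ℂ) w‖ < 1 := by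
    rwa [RCLike.norm_conj]
  have hlamw : (θ:ℂ) / (1 - w) = lam := by
    have h1 : (1:ℂ) - w = (θ:ℂ) / lam := by
      rw [hwdef]
      field_simp
      ring
    rw [h1]
    field_simp
  have hlamw' : (θ:ℂ) / (1 - (starRingEnd ℂ) w) = (starRingEnd ℂ) lam := by
    have := congrArg (starRingEnd ℂ) hlamw
    simpa [map_div₀, Complex.conj_ofReal] using this
  -- the sequence z
  set z : ℕ → ℂ := fun l => (w / (1 - (θ:ℂ))) ^ l + ((starRingEnd ℂ) w / (1 - (θ:ℂ))) ^ l
    with hz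
  have hiter : ∀ k, (opA (fun k => θ * (1 - θ) ^ k))^[k] z
      = fun l => lam ^ k * (w / (1 - (θ:ℂ))) ^ l
          + ((starRingEnd ℂ) lam) ^ k * ((starRingEnd ℂ) w / (1 - (θ:ℂ))) ^ l := by
    intro k
    induction k with
    | zero => funext l; simp [hz]
    | succ k ih =>
      rw [Function.iterate_succ_apply', ih,
        show (fun l => lam ^ k * (w / (1 - (θ:ℂ))) ^ l
            + ((starRingEnd ℂ) lam) ^ k * ((starRingEnd ℂ) w / (1 - (θ:ℂ))) ^ l)
          = (fun l => (lam ^ k) * (w / (1 - (θ:ℂ))) ^ l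
            + (((starRingEnd ℂ) lam) ^ k) * (((starRingEnd ℂ) w) / (1 - (θ:ℂ))) ^ l) from rfl,
        opA_two hθ0 hθ1 w ((starRingEnd ℂ) w) (lam ^ k) (((starRingEnd ℂ) lam) ^ k)
          hnormw hnormw']
      funext l
      rw [hlamw, hlamw']
      ring
  -- norms of the base sequences
  have h1θ : (0:ℝ) < 1 - θ := by linarith
  have habsX : ‖w / (1 - (θ:ℂ))‖ = ‖w‖ / (1 - θ) := by
    rw [norm_div]
    congr 1
    rw [show (1 - (θ:ℂ)) = ((1 - θ : ℝ):ℂ) by push_cast; ring, Complex.norm_real,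
      Real.norm_eq_abs, abs_of_pos h1θ]
  have habsX' : ‖(starRingEnd ℂ) w / (1 - (θ:ℂ))‖ = ‖w‖ / (1 - θ) := by
    rw [norm_div, Complex.norm_conj]
    congr 1
    rw [show (1 - (θ:ℂ)) = ((1 - θ : ℝ):ℂ) by push_cast; ring, Complex.norm_real,
      Real.norm_eq_abs, abs_of_pos h1θ]
  refine ⟨z, ?_, ?_, ?_, ?_⟩
  · -- z ≠ 0
    intro h
    have h0 := congrFun h 0
    simp [hz] at h0
  · -- real values
    intro k
    have hconjX : (starRingEnd ℂ) (w / (1 - (θ:ℂ))) = (starRingEnd ℂ) w / (1 - (θ:ℂ)) := by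
      rw [map_div₀]
      congr 1
      simp [Complex.conj_ofReal]
    show ((w / (1 - (θ:ℂ))) ^ k + ((starRingEnd ℂ) w / (1 - (θ:ℂ))) ^ k).im = 0
    rw [← hconjX, ← map_pow, Complex.add_im, Complex.conj_im]
    ring
  · -- membership in the iterated domain
    intro k _
    unfold memDA
    rw [hiter k]
    apply Summable.of_nonneg_of_le
      (fun l => mul_nonneg (by positivity) (norm_nonneg _))
      (fun l => ?_)
      (((summable_geometric_of_lt_one (norm_nonneg w)
        (by exact hnormw)).mul_left (2 * θ * γ₁ ^ k)))
    calc θ * (1-θ)^l * ‖lam ^ k * (w / (1 - (θ:ℂ))) ^ l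
          + ((starRingEnd ℂ) lam) ^ k * ((starRingEnd ℂ) w / (1 - (θ:ℂ))) ^ l‖
        ≤ θ * (1-θ)^l * (‖lam ^ k * (w / (1 - (θ:ℂ))) ^ l‖
          + ‖((starRingEnd ℂ) lam) ^ k * ((starRingEnd ℂ) w / (1 - (θ:ℂ))) ^ l‖) := by
          apply mul_le_mul_of_nonneg_left (norm_add_le _ _) (by positivity)
      _ = 2 * θ * γ₁ ^ k * ‖w‖ ^ l := by
          rw [norm_mul, norm_mul, norm_pow, norm_pow, norm_pow, norm_pow, habsX, habsX',
            hnormlam, Complex.norm_conj, hnormlam, div_pow]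
          field_simp
          ring
  · -- B_s z = 0
    funext l
    unfold opB
    simp only [hiter]
    have hterm : ∀ k ∈ Finset.range s,
        (γ₁:ℂ)^(s-1-k) * (lam ^ k * (w / (1 - (θ:ℂ))) ^ l
          + ((starRingEnd ℂ) lam) ^ k * ((starRingEnd ℂ) w / (1 - (θ:ℂ))) ^ l)
        = ((γ₁:ℂ)^(s-1-k) * lam ^ k) * (w / (1 - (θ:ℂ))) ^ l
          + ((γ₁:ℂ)^(s-1-k) * ((starRingEnd ℂ) lam) ^ k) * ((starRingEnd ℂ) w / (1 - (θ:ℂ))) ^ l :=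
      fun k _ => by ring
    rw [Finset.sum_congr rfl hterm, Finset.sum_add_distrib, ← Finset.sum_mul, ← Finset.sum_mul,
      hsumzero lam hlams hlamne, hsumzero _ hlams' hlamne', zero_mul, zero_mul, add_zero]
    rfl
end
end
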